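/- Let L be a line arrangement (over any field), let m be the maximum multiplicity of its crossing points, and let n be the total number of crossing points. If n < 2m, then L is either a pencil or a near pencil. -/

import Mathlib

open Projectivization

/-- The projective plane over `K`, with points (and, dually, lines) given by
projectivizing `K^3`. -/
abbrev PP (K : Type*) [Field K] := Projectivization K (Fin 3 → K)

/-- Incidence: the point `p` lies on the line `l` (given by dual coordinates):
the dot product of (any) homogeneous coordinates vanishes. -/
def incid {K : Type*} [Field K] (p l : PP K) : Prop :=
  dotProduct p.rep l.rep = 0

/-- The multiplicity of a point `p` with respect to a line arrangement `L`:
the number of lines of `L` passing through `p`. -/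
noncomputable def mult {K : Type*} [Field K] (L : Set (PP K)) (p : PP K) : ℕ :=
  {l ∈ L | incid p l}.ncard

/-- `p` is a crossing point of the arrangement `L`. -/
def crossing {K : Type*} [Field K] (L : Set (PP K)) (p : PP K) : Prop :=
  2 ≤ mult L p

/-- `p` is a modular point of `L`: a crossing point such that for every other
crossing point `q`, some line of `L` passes through both `p` and `q`. -/
def modular {K : Type*} [Field K] (L : Set (PP K)) (p : PP K) : Prop :=
  crossing L p ∧ ∀ q, crossing L q → q ≠ p → ∃ l ∈ L, incid p l ∧ incid q l

/-- `t_k`: the number of crossing points of `L` of multiplicity exactly `k`. -/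
noncomputable def tk {K : Type*} [Field K] (L : Set (PP K)) (k : ℕ) : ℕ :=
  {p | mult L p = k}.ncard

/-- A pencil: all lines pass through one common point. -/
def isPencil {K : Type*} [Field K] (L : Set (PP K)) : Prop :=
  ∃ p, ∀ l ∈ L, incid p l

/-- A near pencil: an arrangement of `s ≥ 3` lines, exactly `s - 1` of which
are concurrent. -/
def isNearPencil {K : Type*} [Field K] (L : Set (PP K)) : Prop :=
  3 ≤ L.ncard ∧ ∃ p, {l ∈ L | incid p l}.ncard + 1 = L.ncard

section Aux
open Module Matrix
variable {K : Type*} [Field K]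

/-- Core linear algebra: two independent pairs can't be mutually orthogonal in K³. -/
lemma four_dot_zero {v1 v2 w1 w2 : Fin 3 → K}
    (hv : LinearIndependent K ![v1, v2]) (hw : LinearIndependent K ![w1, w2])
    (h11 : dotProduct v1 w1 = 0) (h12 : dotProduct v1 w2 = 0)
    (h21 : dotProduct v2 w1 = 0) (h22 : dotProduct v2 w2 = 0) : False := by
  set A : Matrix (Fin 2) (Fin 3) K := Matrix.of ![v1, v2] with hA
  have hmem : ∀ w : Fin 3 → K, dotProduct v1 w = 0 → dotProduct v2 w = 0 →
      w ∈ LinearMap.ker A.mulVecLin := by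
    intro w h1 h2
    simp only [LinearMap.mem_ker, Matrix.mulVecLin_apply]
    ext i
    fin_cases i <;> simp [hA, Matrix.mulVec, h1, h2]
  have hspan : Submodule.span K (Set.range ![w1, w2]) ≤ LinearMap.ker A.mulVecLin := by
    rw [Submodule.span_le]
    rintro _ ⟨i, rfl⟩
    fin_cases i <;> simp <;> [exact hmem w1 h11 h21; exact hmem w2 h12 h22]
  have h2le : 2 ≤ finrank K (LinearMap.ker A.mulVecLin) := by
    have := finrank_span_eq_card hw
    simp only [Fintype.card_fin] at this
    calc 2 = finrank K (Submodule.span K (Set.range ![w1, w2])) := this.symm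
      _ ≤ _ := Submodule.finrank_mono hspan
  have hrn := LinearMap.finrank_range_add_finrank_ker A.mulVecLin
  rw [Module.finrank_fin_fun] at hrn
  have hrank1 : A.rank ≤ 1 := by
    have : A.rank = finrank K (LinearMap.range A.mulVecLin) := rfl
    omega
  have hrank2 : A.rank = 2 := by
    rw [← Matrix.rank_transpose, Matrix.rank_eq_finrank_span_cols]
    have hr : Set.range Aᵀ.col = Set.range ![v1, v2] := rfl
    rw [hr, finrank_span_eq_card hv, Fintype.card_fin]
  omega

/-- Existence of a common zero of two dot-product functionals in K³. -/
lemma exists_common_zero (w1 w2 : Fin 3 → K) :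
    ∃ u : Fin 3 → K, u ≠ 0 ∧ dotProduct u w1 = 0 ∧ dotProduct u w2 = 0 := by
  set A : Matrix (Fin 2) (Fin 3) K := Matrix.of ![w1, w2] with hA
  have hrn := LinearMap.finrank_range_add_finrank_ker A.mulVecLin
  rw [Module.finrank_fin_fun] at hrn
  have hrank : A.rank ≤ 2 := by
    have := A.rank_le_card_height
    simpa using this
  have hker : 0 < finrank K (LinearMap.ker A.mulVecLin) := by
    have : A.rank = finrank K (LinearMap.range A.mulVecLin) := rfl
    omega
  obtain ⟨⟨u, hu⟩, hne⟩ := Module.finrank_pos_iff_exists_ne_zero.mp hker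
  refine ⟨u, by simpa [Submodule.mk_eq_zero] using hne, ?_, ?_⟩
  · have := congrFun (LinearMap.mem_ker.mp hu) 0
    simpa [hA, Matrix.mulVec, dotProduct_comm] using this
  · have := congrFun (LinearMap.mem_ker.mp hu) 1
    simpa [hA, Matrix.mulVec, dotProduct_comm] using this

lemma rep_li_of_ne {p q : PP K} (h : p ≠ q) : LinearIndependent K ![p.rep, q.rep] := by
  have := (Projectivization.independent_pair_iff_ne p q).mpr h
  rw [Projectivization.independent_iff] at this
  have he : Projectivization.rep ∘ ![p, q] = ![p.rep, q.rep] := by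
    ext i; fin_cases i <;> rfl
  rwa [he] at this

/-- Any two lines have a common point. -/
lemma exists_point_on_two (l1 l2 : PP K) : ∃ p : PP K, incid p l1 ∧ incid p l2 := by
  obtain ⟨u, hu, h1, h2⟩ := exists_common_zero l1.rep l2.rep
  refine ⟨Projectivization.mk K u hu, ?_, ?_⟩ <;>
  · obtain ⟨a, ha⟩ := Projectivization.exists_smul_eq_mk_rep K u hu
    unfold incid
    rw [← ha, smul_dotProduct]
    simp [h1, h2]

/-- Two distinct points are on at most one common line, and dually. -/
lemma unique_incid {p q l1 l2 : PP K} (hpq : p ≠ q) (hl : l1 ≠ l2)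
    (h1 : incid p l1) (h2 : incid p l2) (h3 : incid q l1) (h4 : incid q l2) : False :=
  four_dot_zero (rep_li_of_ne hpq) (rep_li_of_ne hl) h1 h2 h3 h4

/-- A point on two distinct lines of `L` is crossing. -/
lemma crossing_of_two {L : Set (PP K)} (hfin : L.Finite) {q l1 l2 : PP K}
    (h1 : l1 ∈ L) (h2 : l2 ∈ L) (hne : l1 ≠ l2) (hi1 : incid q l1) (hi2 : incid q l2) :
    crossing L q := by
  have hsub : ({l1, l2} : Set (PP K)) ⊆ {l ∈ L | incid q l} := by
    rintro l (rfl | rfl) <;> exact ⟨by assumption, by assumption⟩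
  have := Set.ncard_le_ncard hsub (hfin.subset (Set.sep_subset _ _))
  rwa [Set.ncard_pair hne] at this

lemma crossings_finite {L : Set (PP K)} (hfin : L.Finite) : {p | crossing L p}.Finite := by
  have hsub : {p | crossing L p} ⊆
      ⋃ l1 ∈ L, ⋃ l2 ∈ L, {p | incid p l1 ∧ incid p l2 ∧ l1 ≠ l2} := by
    intro p hp
    have h2 : 1 < ({l ∈ L | incid p l}).ncard := hp
    obtain ⟨l1, l2, h1, h2', hne⟩ :=
      (Set.one_lt_ncard_iff (hfin.subset (Set.sep_subset _ _))).mp h2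
    simp only [Set.mem_iUnion]
    exact ⟨l1, h1.1, l2, h2'.1, h1.2, h2'.2, hne⟩
  refine Set.Finite.subset ?_ hsub
  refine hfin.biUnion fun l1 _ => hfin.biUnion fun l2 _ => ?_
  refine Set.Subsingleton.finite fun a ha b hb => ?_
  by_contra hab
  exact unique_incid hab ha.2.2 ha.1 ha.2.1 hb.1 hb.2.1

/-- If `l ∈ L` and `p` is not on `l`, then the lines of `L` through `p` inject into
crossing points on `l`. -/
lemma mult_le_crossings_on_line {L : Set (PP K)} (hfin : L.Finite) {p l : PP K}
    (hl : l ∈ L) (hnp : ¬ incid p l) :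
    mult L p ≤ {q | crossing L q ∧ incid q l}.ncard := by
  classical
  set f : PP K → PP K := fun l' => Classical.choose (exists_point_on_two l' l) with hf
  have hfspec : ∀ l', incid (f l') l' ∧ incid (f l') l :=
    fun l' => Classical.choose_spec (exists_point_on_two l' l)
  have hmaps : ∀ l' ∈ {l' ∈ L | incid p l'}, f l' ∈ {q | crossing L q ∧ incid q l} := by
    rintro l' ⟨hl', hpl'⟩
    have hne : l' ≠ l := fun h => hnp (h ▸ hpl')
    exact ⟨crossing_of_two hfin hl' hl hne (hfspec l').1 (hfspec l').2, (hfspec l').2⟩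
  have hinj : Set.InjOn f {l' ∈ L | incid p l'} := by
    rintro l1 ⟨_, hp1⟩ l2 ⟨_, hp2⟩ heq
    by_contra hne
    have hqp : p ≠ f l1 := fun h => hnp (h ▸ (hfspec l1).2)
    have h4 : incid (f l1) l2 := by rw [heq]; exact (hfspec l2).1
    exact unique_incid hqp hne hp1 hp2 (hfspec l1).1 h4
  exact Set.ncard_le_ncard_of_injOn f hmaps hinj
    ((crossings_finite hfin).subset fun q hq => hq.1)

end Aux

/-- if the number n of crossing points satisfies n < 2m, where m
is the maximal multiplicity of a crossing point, then L is a pencil or a near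
pencil. -/
theorem pencil_or_near_pencil_of_few_crossings {K : Type*} [Field K]
    (L : Set (PP K)) (hfin : L.Finite) (hs : 2 ≤ L.ncard) (m : ℕ)
    (hmax : ∃ p, crossing L p ∧ mult L p = m)
    (hle : ∀ p, crossing L p → mult L p ≤ m)
    (hn : {p | crossing L p}.ncard < 2 * m) :
    isPencil L ∨ isNearPencil L := by
  classical
  obtain ⟨p, hpc, hpm⟩ := hmax
  have hm2 : 2 ≤ m := hpm ▸ hpc
  set M := {l ∈ L | ¬ incid p l} with hM
  set T := {l ∈ L | incid p l} with hT
  have hTfin : T.Finite := hfin.subset (Set.sep_subset _ _)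
  have hMfin : M.Finite := hfin.subset (Set.sep_subset _ _)
  by_cases hMe : M = ∅
  · -- pencil
    left
    exact ⟨p, fun l hl => by_contra fun hcon =>
      (Set.eq_empty_iff_forall_notMem.mp hMe l) ⟨hl, hcon⟩⟩
  · obtain ⟨l1, hl1⟩ := Set.nonempty_iff_ne_empty.mpr hMe
    by_cases hM1 : ∃ l2 ∈ M, l2 ≠ l1
    · -- contradiction: count crossings
      exfalso
      obtain ⟨l2, hl2, hne⟩ := hM1
      set S1 := {q | crossing L q ∧ incid q l1} with hS1
      set S2 := {q | crossing L q ∧ incid q l2} with hS2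
      have hSfin1 : S1.Finite := (crossings_finite hfin).subset fun q hq => hq.1
      have hSfin2 : S2.Finite := (crossings_finite hfin).subset fun q hq => hq.1
      have hm1 : m ≤ S1.ncard := hpm ▸ mult_le_crossings_on_line hfin hl1.1 hl1.2
      have hm2' : m ≤ S2.ncard := hpm ▸ mult_le_crossings_on_line hfin hl2.1 hl2.2
      have hinter : (S1 ∩ S2).ncard ≤ 1 := by
        rw [Set.ncard_le_one (hSfin1.inter_of_left _)]
        intro a ha b hb
        by_contra hab
        exact unique_incid hab hne.symm ha.1.2 ha.2.2 hb.1.2 hb.2.2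
      have hunion := Set.ncard_union_add_ncard_inter S1 S2 hSfin1 hSfin2
      have hpnot : p ∉ S1 ∪ S2 := by
        rintro (⟨_, h⟩ | ⟨_, h⟩)
        exacts [hl1.2 h, hl2.2 h]
      have hins : insert p (S1 ∪ S2) ⊆ {q | crossing L q} := by
        rintro q (rfl | hq)
        · exact hpc
        · rcases hq with h | h <;> exact h.1
      have hcard : (insert p (S1 ∪ S2)).ncard = (S1 ∪ S2).ncard + 1 := by
        rw [Set.ncard_insert_of_notMem hpnot (hSfin1.union hSfin2)]
      have hle' : (insert p (S1 ∪ S2)).ncard ≤ {q | crossing L q}.ncard :=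
        Set.ncard_le_ncard hins (crossings_finite hfin)
      omega
    · -- M = {l1} : near pencil
      right
      have hMeq : M = {l1} := by
        apply Set.eq_singleton_iff_unique_mem.mpr
        exact ⟨hl1, fun l hl => by_contra fun h => hM1 ⟨l, hl, h⟩⟩
      have hLeq : L = T ∪ M := by
        ext l; constructor
        · intro hl; by_cases h : incid p l
          exacts [Or.inl ⟨hl, h⟩, Or.inr ⟨hl, h⟩]
        · rintro (h | h) <;> exact h.1
      have hdisj : Disjoint T M := by
        rw [Set.disjoint_left]; rintro l ⟨_, h⟩ ⟨_, h'⟩; exact h' h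
      have hcard : L.ncard = T.ncard + 1 := by
        rw [hLeq, Set.ncard_union_eq hdisj hTfin hMfin, hMeq, Set.ncard_singleton]
      have hTm : T.ncard = m := hpm
      refine ⟨by omega, p, ?_⟩
      have : ({l ∈ L | incid p l}).ncard = T.ncard := by rw [hT]
      omega
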